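/- Let X_1,...,X_k be finite sets, p_a a product distribution p_a(x_{[k]}) = ∏_j p_a(x_j) on X_1 × ⋯ × X_k, and p_b any distribution whose support is contained in the support of p_a. For λ ∈ [0,1] let p_λ = (1−λ)p_a + λ p_b. Then for every nonempty S ⊆ [k], the total correlation T_λ(S) = ∑_{j∈S} H_λ(X_j) − H_λ(X_S), as a function of λ, has right derivative 0 at λ = 0. -/

import Mathlib

open Finset

/-- Shannon entropy of the random variable `f` on the finite probability space `Ω`
with weights `p`. -/
noncomputable def shEntropy {Ω β : Type*} [Fintype Ω] [DecidableEq β]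
    (p : Ω → ℝ) (f : Ω → β) : ℝ :=
  -∑ b ∈ Finset.univ.image f,
      (∑ ω ∈ Finset.univ.filter (fun ω => f ω = b), p ω) *
        Real.log (∑ ω ∈ Finset.univ.filter (fun ω => f ω = b), p ω)

/-- The restriction `x ↦ x_S` of a tuple to the coordinates in `S`. -/
def restrictOn {k : ℕ} {𝒳 : Fin k → Type*} (S : Finset (Fin k)) :
    (∀ j, 𝒳 j) → ∀ j : Fin k, Option (𝒳 j) :=
  fun x j => if j ∈ S then some (x j) else none

/-- derivative of `m * log m` along an affine path. -/
lemma aux_hasDerivAt_mul_log (A B : ℝ) (hA : 0 ≤ A) (h : A = 0 → B = 0) :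
    HasDerivAt (fun l : ℝ => ((1 - l) * A + l * B) * Real.log ((1 - l) * A + l * B))
      ((B - A) * (Real.log A + 1)) 0 := by
  rcases eq_or_lt_of_le hA with hA0 | hA0
  · have hB : B = 0 := h hA0.symm
    have : ((B - A) * (Real.log A + 1)) = 0 := by rw [hB, ← hA0]; ring
    rw [this]
    have : (fun l : ℝ => ((1 - l) * A + l * B) * Real.log ((1 - l) * A + l * B))
        = fun _ : ℝ => (0 : ℝ) := by
      funext l; rw [hB, ← hA0]; simp
    rw [this]
    exact hasDerivAt_const _ _
  · have hm : HasDerivAt (fun l : ℝ => (1 - l) * A + l * B) (B - A) 0 := by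
      have h1 : HasDerivAt (fun l : ℝ => (1 - l) * A + l * B) ((-1) * A + 1 * B) 0 :=
        ((((hasDerivAt_id (0 : ℝ)).const_sub 1).mul_const A).add
          ((hasDerivAt_id (0 : ℝ)).mul_const B))
      convert h1 using 1
      ring
    have hm0 : (1 - (0:ℝ)) * A + (0:ℝ) * B = A := by ring
    have hne : (1 - (0:ℝ)) * A + (0:ℝ) * B ≠ 0 := by rw [hm0]; exact hA0.ne'
    have hlog : HasDerivAt (fun l : ℝ => Real.log ((1 - l) * A + l * B))
        ((B - A) / ((1 - (0:ℝ)) * A + (0:ℝ) * B)) 0 := hm.log hne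
    have hmul := hm.fun_mul hlog
    refine hmul.congr_deriv ?_
    rw [hm0]
    field_simp
  
/-- fiberwise summation against a function of the value. -/
lemma aux_fiber_sum {Ω β : Type*} [Fintype Ω] [DecidableEq β]
    (g : Ω → ℝ) (f : Ω → β) (c : β → ℝ) :
    ∑ b ∈ Finset.univ.image f,
        (∑ ω ∈ Finset.univ.filter (fun ω => f ω = b), g ω) * c b
      = ∑ ω, g ω * c (f ω) := by
  rw [← Finset.sum_fiberwise_of_maps_to (g := f) (t := Finset.univ.image f)
      (fun x _ => Finset.mem_image_of_mem f (Finset.mem_univ x)) (fun ω => g ω * c (f ω))]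
  refine Finset.sum_congr rfl fun b _ => ?_
  rw [Finset.sum_mul]
  refine Finset.sum_congr rfl fun ω hω => ?_
  rw [(Finset.mem_filter.1 hω).2]

/-- derivative of the entropy of `f` along the mixture path at `λ = 0`. -/
lemma aux_entropy_hasDerivAt {Ω β : Type*} [Fintype Ω] [DecidableEq β]
    (pa pb : Ω → ℝ) (hpa0 : ∀ ω, 0 ≤ pa ω) (hsupp : ∀ ω, pa ω = 0 → pb ω = 0)
    (f : Ω → β) :
    HasDerivAt (fun l => shEntropy (fun ω => (1 - l) * pa ω + l * pb ω) f)
      (-∑ b ∈ Finset.univ.image f,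
        ((∑ ω ∈ Finset.univ.filter (fun ω => f ω = b), pb ω)
            - ∑ ω ∈ Finset.univ.filter (fun ω => f ω = b), pa ω)
          * (Real.log (∑ ω ∈ Finset.univ.filter (fun ω => f ω = b), pa ω) + 1)) 0 := by
  set A : β → ℝ := fun b => ∑ ω ∈ Finset.univ.filter (fun ω => f ω = b), pa ω with hA
  set B : β → ℝ := fun b => ∑ ω ∈ Finset.univ.filter (fun ω => f ω = b), pb ω with hB
  have hfun : (fun l => shEntropy (fun ω => (1 - l) * pa ω + l * pb ω) f)
      = fun l => -∑ b ∈ Finset.univ.image f,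
          ((1 - l) * A b + l * B b) * Real.log ((1 - l) * A b + l * B b) := by
    funext l
    unfold shEntropy
    congr 1
    refine Finset.sum_congr rfl fun b _ => ?_
    have : ∑ ω ∈ Finset.univ.filter (fun ω => f ω = b), ((1 - l) * pa ω + l * pb ω)
        = (1 - l) * A b + l * B b := by
      rw [Finset.sum_add_distrib, hA, hB, Finset.mul_sum, Finset.mul_sum]
    rw [this]
  rw [hfun]
  refine HasDerivAt.neg ?_
  refine HasDerivAt.fun_sum fun b _ => ?_
  refine aux_hasDerivAt_mul_log (A b) (B b) ?_ ?_
  · exact Finset.sum_nonneg fun ω _ => hpa0 ω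
  · intro h0
    refine Finset.sum_eq_zero fun ω hω => ?_
    exact hsupp ω ((Finset.sum_eq_zero_iff_of_nonneg (fun ω _ => hpa0 ω)).1 h0 ω hω)

/-- marginalization of a product measure. -/
lemma aux_marginal {k : ℕ} {𝒳 : Fin k → Type*} [∀ j, Fintype (𝒳 j)] [∀ j, DecidableEq (𝒳 j)]
    (q : ∀ j : Fin k, 𝒳 j → ℝ) (hq1 : ∀ j, ∑ x, q j x = 1)
    (S : Finset (Fin k)) (ω : ∀ j, 𝒳 j) :
    ∑ x ∈ Finset.univ.filter (fun x : ∀ j, 𝒳 j => ∀ j ∈ S, x j = ω j), ∏ j, q j (x j)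
      = ∏ j ∈ S, q j (ω j) := by
  classical
  have hset : Finset.univ.filter (fun x : ∀ j, 𝒳 j => ∀ j ∈ S, x j = ω j)
      = Fintype.piFinset (fun j => if j ∈ S then ({ω j} : Finset (𝒳 j)) else Finset.univ) := by
    ext x
    simp only [Finset.mem_filter, Finset.mem_univ, true_and, Fintype.mem_piFinset]
    constructor
    · intro h j
      by_cases hj : j ∈ S
      · simp [hj, h j hj]
      · simp [hj]
    · intro h j hj
      have := h j
      simpa [hj] using this
  rw [hset, ← Finset.prod_univ_sum]
  have : ∀ j, (∑ y ∈ (if j ∈ S then ({ω j} : Finset (𝒳 j)) else Finset.univ), q j y)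
      = if j ∈ S then q j (ω j) else 1 := by
    intro j
    by_cases hj : j ∈ S <;> simp [hj, hq1 j]
  rw [Finset.prod_congr rfl fun j _ => this j]
  rw [Finset.prod_ite_mem, Finset.univ_inter]

lemma aux_restrict_eq_iff {k : ℕ} {𝒳 : Fin k → Type*} (S : Finset (Fin k))
    (x ω : ∀ j, 𝒳 j) :
    restrictOn S x = restrictOn S ω ↔ ∀ j ∈ S, x j = ω j := by
  constructor
  · intro h j hj
    have := congrFun h j
    simpa [restrictOn, hj] using this
  · intro h
    funext j
    by_cases hj : j ∈ S <;> simp [restrictOn, hj, h j]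

/-- Let `p_a` be a product distribution on `𝒳_1 × ⋯ × 𝒳_k`, `p_b` a distribution
whose support is contained in that of `p_a`, and `p_λ = (1-λ)p_a + λ p_b`.  Then
for every nonempty `S ⊆ [k]`, the total correlation
`T_λ(S) = ∑_{j∈S} H_λ(X_j) - H_λ(X_S)` has right derivative `0` at `λ = 0`. -/
theorem totalCorrelation_mixture_rightDeriv_zero
    {k : ℕ} {𝒳 : Fin k → Type*} [∀ j, Fintype (𝒳 j)] [∀ j, DecidableEq (𝒳 j)]
    (q : ∀ j : Fin k, 𝒳 j → ℝ) (hq0 : ∀ j x, 0 ≤ q j x) (hq1 : ∀ j, ∑ x, q j x = 1)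
    (pa : (∀ j, 𝒳 j) → ℝ) (hpa : ∀ x, pa x = ∏ j, q j (x j))
    (pb : (∀ j, 𝒳 j) → ℝ) (hpb0 : ∀ x, 0 ≤ pb x) (hpb1 : ∑ x, pb x = 1)
    (hsupp : ∀ x, pa x = 0 → pb x = 0)
    (S : Finset (Fin k)) (hS : S.Nonempty)
    (T : ℝ → ℝ)
    (hT : ∀ l : ℝ, T l =
      (∑ j ∈ S, shEntropy (fun x => (1 - l) * pa x + l * pb x)
          (fun x : ∀ j, 𝒳 j => x j)) -
        shEntropy (fun x => (1 - l) * pa x + l * pb x) (restrictOn S)) :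
    Filter.Tendsto (fun l : ℝ => (T l - T 0) / l)
      (nhdsWithin 0 (Set.Ioi 0)) (nhds 0) := by
  classical
  have hpa0 : ∀ x, 0 ≤ pa x := fun x => by
    rw [hpa x]; exact Finset.prod_nonneg fun j _ => hq0 j (x j)
  -- sum of pa is 1
  have hpa1 : ∑ x, pa x = 1 := by
    have : ∑ x : ∀ j, 𝒳 j, ∏ j, q j (x j) = ∏ j, ∑ y, q j y := by
      rw [Finset.prod_univ_sum (fun _ => Finset.univ) (fun j y => q j y)]
      rw [Fintype.piFinset_univ]
    rw [Finset.sum_congr rfl fun x _ => hpa x, this]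
    simp [hq1]
  -- derivatives of the individual entropies
  have hder : ∀ {β : Type _} [DecidableEq β] (f : (∀ j, 𝒳 j) → β),
      HasDerivAt (fun l => shEntropy (fun x => (1 - l) * pa x + l * pb x) f)
        (-∑ x, (pb x - pa x)
          * (Real.log (∑ y ∈ Finset.univ.filter (fun y => f y = f x), pa y) + 1)) 0 := by
    intro β _ f
    have h := aux_entropy_hasDerivAt pa pb hpa0 hsupp f
    have hval : (-∑ b ∈ Finset.univ.image f,
        ((∑ ω ∈ Finset.univ.filter (fun ω => f ω = b), pb ω)
            - ∑ ω ∈ Finset.univ.filter (fun ω => f ω = b), pa ω)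
          * (Real.log (∑ ω ∈ Finset.univ.filter (fun ω => f ω = b), pa ω) + 1))
        = -∑ x, (pb x - pa x)
          * (Real.log (∑ y ∈ Finset.univ.filter (fun y => f y = f x), pa y) + 1) := by
      congr 1
      have := aux_fiber_sum (fun x => pb x - pa x) f
        (fun b => Real.log (∑ y ∈ Finset.univ.filter (fun y => f y = b), pa y) + 1)
      rw [← this]
      refine Finset.sum_congr rfl fun b _ => ?_
      rw [Finset.sum_sub_distrib]
    rw [← hval]
    exact h
  -- the derivative of T
  set c : (∀ j, 𝒳 j) → ℝ := fun x => pb x - pa x with hc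
  have hderT : HasDerivAt T
      ((∑ j ∈ S, -∑ x, c x
          * (Real.log (∑ y ∈ Finset.univ.filter (fun y : ∀ j, 𝒳 j => y j = x j), pa y) + 1))
        - (-∑ x, c x
          * (Real.log (∑ y ∈ Finset.univ.filter
              (fun y => restrictOn S y = restrictOn S x), pa y) + 1))) 0 := by
    have h1 : ∀ j ∈ S, HasDerivAt
        (fun l => shEntropy (fun x => (1 - l) * pa x + l * pb x)
          (fun x : ∀ j, 𝒳 j => x j))
        (-∑ x, c x
          * (Real.log (∑ y ∈ Finset.univ.filter (fun y : ∀ j, 𝒳 j => y j = x j), pa y) + 1))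
        0 := fun j _ => hder (fun x => x j)
    have h2 := hder (restrictOn S)
    have := (HasDerivAt.fun_sum h1).fun_sub h2
    have hTfun : T = fun l =>
        (∑ j ∈ S, shEntropy (fun x => (1 - l) * pa x + l * pb x)
            (fun x : ∀ j, 𝒳 j => x j)) -
          shEntropy (fun x => (1 - l) * pa x + l * pb x) (restrictOn S) :=
      funext hT
    rw [hTfun]
    exact this
  -- the derivative is zero
  have hzero : ((∑ j ∈ S, -∑ x, c x
          * (Real.log (∑ y ∈ Finset.univ.filter (fun y : ∀ j, 𝒳 j => y j = x j), pa y) + 1))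
        - (-∑ x, c x
          * (Real.log (∑ y ∈ Finset.univ.filter
              (fun y => restrictOn S y = restrictOn S x), pa y) + 1))) = 0 := by
    -- identify the marginals with products of the q's
    have hmargS : ∀ x : ∀ j, 𝒳 j,
        ∑ y ∈ Finset.univ.filter (fun y => restrictOn S y = restrictOn S x), pa y
          = ∏ j ∈ S, q j (x j) := by
      intro x
      have hset : Finset.univ.filter (fun y : ∀ j, 𝒳 j => restrictOn S y = restrictOn S x)
          = Finset.univ.filter (fun y : ∀ j, 𝒳 j => ∀ j ∈ S, y j = x j) := by
        ext y
        simp [aux_restrict_eq_iff]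
      rw [hset, Finset.sum_congr rfl fun y _ => hpa y]
      exact aux_marginal q hq1 S x
    have hmargj : ∀ (j : Fin k) (x : ∀ j, 𝒳 j),
        ∑ y ∈ Finset.univ.filter (fun y : ∀ j, 𝒳 j => y j = x j), pa y = q j (x j) := by
      intro j x
      have hset : Finset.univ.filter (fun y : ∀ j, 𝒳 j => y j = x j)
          = Finset.univ.filter (fun y : ∀ j, 𝒳 j => ∀ j' ∈ ({j} : Finset (Fin k)), y j' = x j') := by
        ext y
        simp
      rw [hset, Finset.sum_congr rfl fun y _ => hpa y, aux_marginal q hq1 {j} x,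
        Finset.prod_singleton]
    -- per-point cancellation
    have e1 : (∑ j ∈ S, -∑ x, c x
          * (Real.log (∑ y ∈ Finset.univ.filter (fun y : ∀ j, 𝒳 j => y j = x j), pa y) + 1))
        = -∑ x, ∑ j ∈ S, c x * (Real.log (q j (x j)) + 1) := by
      simp only [hmargj]
      rw [Finset.sum_neg_distrib, Finset.sum_comm]
    have e2 : (-∑ x, c x
          * (Real.log (∑ y ∈ Finset.univ.filter
              (fun y => restrictOn S y = restrictOn S x), pa y) + 1))
        = -∑ x, c x * (Real.log (∏ j ∈ S, q j (x j)) + 1) := by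
      congr 1
      refine Finset.sum_congr rfl fun x _ => ?_
      rw [hmargS x]
    rw [e1, e2]
    have e3 : (-∑ x, ∑ j ∈ S, c x * (Real.log (q j (x j)) + 1))
          - (-∑ x, c x * (Real.log (∏ j ∈ S, q j (x j)) + 1))
        = ∑ x, (c x * (Real.log (∏ j ∈ S, q j (x j)) + 1)
              - ∑ j ∈ S, c x * (Real.log (q j (x j)) + 1)) := by
      rw [Finset.sum_sub_distrib]
      ring
    rw [e3]
    have e4 : ∀ x : ∀ j, 𝒳 j,
        (c x * (Real.log (∏ j ∈ S, q j (x j)) + 1)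
            - ∑ j ∈ S, c x * (Real.log (q j (x j)) + 1))
        = -(c x * ((S.card : ℝ) - 1)) := by
      intro x
      by_cases hx : pa x = 0
      · have hcx : c x = 0 := by rw [hc]; simp [hx, hsupp x hx]
        rw [hcx]
        simp
      · have hprod : (∏ j, q j (x j)) ≠ 0 := by rw [← hpa x]; exact hx
        have hne : ∀ j ∈ S, q j (x j) ≠ 0 := fun j _ =>
          Finset.prod_ne_zero_iff.1 hprod j (Finset.mem_univ j)
        rw [Real.log_prod hne, ← Finset.mul_sum, Finset.sum_add_distrib,
          Finset.sum_const, nsmul_eq_mul, mul_one]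
        ring
    rw [Finset.sum_congr rfl fun x _ => e4 x, Finset.sum_neg_distrib,
      ← Finset.sum_mul]
    have : ∑ x, c x = 0 := by
      rw [hc, Finset.sum_sub_distrib, hpb1, hpa1]
      ring
    rw [this]
    ring
  have hT0 : HasDerivAt T 0 0 := hzero ▸ hderT
  have h := (hT0.hasDerivWithinAt (s := Set.Ioi (0 : ℝ)))
  rw [hasDerivWithinAt_iff_tendsto_slope] at h
  have hs : Set.Ioi (0 : ℝ) \ {0} = Set.Ioi (0 : ℝ) :=
    Set.diff_singleton_eq_self (by simp)
  rw [hs] at h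
  refine h.congr fun l => ?_
  rw [slope_def_field]
  rw [sub_zero]
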